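/- arXiv:2306.04464 — 4 statements merged into one kernel-verified Lean document; each statement's English description precedes it below -/
import Mathlib

section
/- Combine the previous two statements: Let Q ⊆ ℝ^C be a nonempty closed convex box, ψ, φ : ℝ^C → ℝ^C Lipschitz with constants L_ψ, L_φ, X ∈ ℝ^{C×C}, v̂ ∈ ℝ^C, and 0 < ε ≤ 1 such that L_ψ + L_φ‖X‖ < 1. Suppose g(q) = q + ε(ψ(q) + φ(Xq + v̂) − q) maps Q into Q. Then g has a unique fixed point in Q and all iterates of g from any initial point in Q converge to it. -/
/-- Operator (spectral) norm of a real matrix, viewed as a linear map on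
Euclidean space. -/
noncomputable def opNorm {C : ℕ} (M : Matrix (Fin C) (Fin C) ℝ) : ℝ :=
  ‖LinearMap.toContinuousLinearMap (Matrix.toEuclideanLin M)‖

/-- Theorem 1 (CVP-SC): under L_ψ + L_φ‖X‖ < 1, the incremental Volt/Var map
g(q) = q + ε(ψ(q) + φ(Xq + v̂) − q) mapping the feasible box Q into itself
has a unique fixed point in Q, and all iterates from Q converge to it. -/
theorem unique_asymptotically_stable_equilibrium_CVP_SC {C : ℕ}
    (lo hi : Fin C → ℝ) (Q : Set (EuclideanSpace ℝ (Fin C)))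
    (hQ : Q = {q : EuclideanSpace ℝ (Fin C) | ∀ i, q i ∈ Set.Icc (lo i) (hi i)})
    (hne : Q.Nonempty)
    (ψ φ : EuclideanSpace ℝ (Fin C) → EuclideanSpace ℝ (Fin C))
    (Lψ Lφ : ℝ) (hLψ0 : 0 ≤ Lψ) (hLφ0 : 0 ≤ Lφ)
    (hψ : ∀ a b, ‖ψ a - ψ b‖ ≤ Lψ * ‖a - b‖)
    (hφ : ∀ a b, ‖φ a - φ b‖ ≤ Lφ * ‖a - b‖)
    (X : Matrix (Fin C) (Fin C) ℝ) (vhat : EuclideanSpace ℝ (Fin C))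
    (ε : ℝ) (hε0 : 0 < ε) (hε1 : ε ≤ 1)
    (hC1 : Lψ + Lφ * opNorm X < 1)
    (g : EuclideanSpace ℝ (Fin C) → EuclideanSpace ℝ (Fin C))
    (hg : ∀ q, g q = q + ε • (ψ q + φ (Matrix.toEuclideanLin X q + vhat) - q))
    (hmaps : Set.MapsTo g Q Q) :
    ∃ qstar ∈ Q, g qstar = qstar ∧
      (∀ q' ∈ Q, g q' = q' → q' = qstar) ∧
      ∀ q0 ∈ Q, Filter.Tendsto (fun t => g^[t] q0) Filter.atTop (nhds qstar) := by
  have hXnn : (0:ℝ) ≤ opNorm X := norm_nonneg _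
  set K : ℝ := Lψ + Lφ * opNorm X with hK
  have hK0 : 0 ≤ K := by positivity
  set c : ℝ := 1 - ε * (1 - K) with hc
  have hc0 : 0 ≤ c := by nlinarith
  have hc1 : c < 1 := by nlinarith
  -- contraction estimate
  have hdist : ∀ a b, dist (g a) (g b) ≤ c * dist a b := by
    intro a b
    have hX : ∀ z : EuclideanSpace ℝ (Fin C),
        ‖Matrix.toEuclideanLin X z‖ ≤ opNorm X * ‖z‖ := fun z =>
      (LinearMap.toContinuousLinearMap (Matrix.toEuclideanLin X)).le_opNorm z
    have key : g a - g b = (1 - ε) • (a - b) + ε • (ψ a - ψ b)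
        + ε • (φ (Matrix.toEuclideanLin X a + vhat) - φ (Matrix.toEuclideanLin X b + vhat)) := by
      rw [hg a, hg b]
      simp only [smul_sub, smul_add, sub_smul, one_smul]
      abel
    have h1 : ‖g a - g b‖ ≤ (1 - ε) * ‖a - b‖ + ε * (Lψ * ‖a - b‖)
        + ε * (Lφ * (opNorm X * ‖a - b‖)) := by
      rw [key]
      refine (norm_add_le _ _).trans ?_
      gcongr
      · refine (norm_add_le _ _).trans ?_
        gcongr
        · rw [norm_smul, Real.norm_eq_abs, abs_of_nonneg (by linarith)]
        · rw [norm_smul, Real.norm_eq_abs, abs_of_pos hε0]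
          exact mul_le_mul_of_nonneg_left (hψ a b) hε0.le
      · rw [norm_smul, Real.norm_eq_abs, abs_of_pos hε0]
        refine mul_le_mul_of_nonneg_left ?_ hε0.le
        refine (hφ _ _).trans ?_
        have : Matrix.toEuclideanLin X a + vhat - (Matrix.toEuclideanLin X b + vhat)
            = Matrix.toEuclideanLin X (a - b) := by
          rw [map_sub]; abel
        rw [this]
        exact mul_le_mul_of_nonneg_left (hX _) hLφ0
    have : ‖g a - g b‖ ≤ c * ‖a - b‖ := by
      refine h1.trans_eq ?_
      rw [hc, hK]; ring
    simpa [dist_eq_norm] using this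
  -- Q is closed
  have hclosed : IsClosed Q := by
    rw [hQ]
    have : {q : EuclideanSpace ℝ (Fin C) | ∀ i, q i ∈ Set.Icc (lo i) (hi i)}
        = ⋂ i, (fun q : EuclideanSpace ℝ (Fin C) => q i) ⁻¹' Set.Icc (lo i) (hi i) := by
      ext q; simp
    rw [this]
    exact isClosed_iInter fun i =>
      isClosed_Icc.preimage (EuclideanSpace.proj i).continuous
  haveI : CompleteSpace Q := hclosed.completeSpace_coe
  haveI : Nonempty Q := hne.to_subtype
  set g' : Q → Q := hmaps.restrict g Q Q with hg'
  have hcw : ContractingWith ⟨c, hc0⟩ g' := by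
    constructor
    · exact_mod_cast hc1
    · refine LipschitzWith.of_dist_le_mul fun x y => ?_
      exact hdist x y
  have hiter : ∀ (t : ℕ) (x : Q), ((g'^[t] x : Q) : EuclideanSpace ℝ (Fin C)) = g^[t] (x : EuclideanSpace ℝ (Fin C)) := by
    intro t
    induction t with
    | zero => intro x; simp
    | succ n ih =>
      intro x
      rw [Function.iterate_succ_apply', Function.iterate_succ_apply']
      rw [← ih x]
      rfl
  set p : Q := ContractingWith.fixedPoint g' hcw with hp
  refine ⟨(p : EuclideanSpace ℝ (Fin C)), p.2, ?_, ?_, ?_⟩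
  · have := hcw.fixedPoint_isFixedPt
    have h := congrArg (Subtype.val) this
    exact h
  · intro q' hq' hfix
    have : Function.IsFixedPt g' ⟨q', hq'⟩ := by
      apply Subtype.ext
      simpa [hg', Set.MapsTo.restrict, Subtype.map] using hfix
    have := hcw.fixedPoint_unique this
    exact congrArg Subtype.val this
  · intro q0 hq0
    have h := hcw.tendsto_iterate_fixedPoint ⟨q0, hq0⟩
    have h2 := (continuous_subtype_val.tendsto _).comp h
    simpa [Function.comp_def, hiter] using h2
end

section
/- Let X ∈ ℝ^{C×C} be symmetric positive definite, and for each n let ψ_n : ℝ → ℝ be Lipschitz with constant L_ψ_n < 1 and φ_n : ℝ → ℝ be strictly decreasing. Define Ψ(q) = (ψ_1(q_1), …, ψ_C(q_C)) and Φ(v) = (φ_1(v_1), …, φ_C(v_C)). Then there is at most one q ∈ ℝ^C satisfying q = Ψ(q) + Φ(Xq + v̂) for fixed v̂ ∈ ℝ^C. -/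
/-- Uniqueness part of Theorem 2 (RP-SC): if X is symmetric positive definite,
each ψ_n is Lipschitz with constant < 1 and each φ_n is strictly decreasing,
then the equilibrium equation q_n = ψ_n(q_n) + φ_n((Xq + v̂)_n) has at most
one solution. -/
theorem unique_equilibrium_RP_SC {C : ℕ}
    (X : Matrix (Fin C) (Fin C) ℝ) (hX : X.PosDef)
    (ψ φ : Fin C → ℝ → ℝ) (Lψ : Fin C → ℝ)
    (hψ : ∀ n, ∀ a b : ℝ, |ψ n a - ψ n b| ≤ Lψ n * |a - b|)
    (hLψ : ∀ n, Lψ n < 1)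
    (hφ : ∀ n, StrictAnti (φ n))
    (vhat : Fin C → ℝ) (q q' : Fin C → ℝ)
    (hq : ∀ n, q n = ψ n (q n) + φ n ((X.mulVec q + vhat) n))
    (hq' : ∀ n, q' n = ψ n (q' n) + φ n ((X.mulVec q' + vhat) n)) :
    q = q' := by
  by_contra hne
  have hd : q - q' ≠ 0 := sub_ne_zero.mpr hne
  have hpos := hX.dotProduct_mulVec_pos hd
  have key : ∀ n, (q - q') n * (X.mulVec (q - q')) n ≤ 0 := by
    intro n
    have hXd : (X.mulVec (q - q')) n
        = (X.mulVec q + vhat) n - (X.mulVec q' + vhat) n := by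
      simp [Matrix.mulVec_sub]
    set u := (X.mulVec q + vhat) n with hu
    set u' := (X.mulVec q' + vhat) n with hu'
    have hdn : (q - q') n = (ψ n (q n) - ψ n (q' n)) + (φ n u - φ n u') := by
      have := hq n; have := hq' n
      simp only [Pi.sub_apply]
      linarith
    have habs := abs_le.mp (hψ n (q n) (q' n))
    rcases lt_trichotomy u u' with h | h | h
    · -- u < u' : φ n u > φ n u', need (q - q') n ≥ 0
      have hφn : φ n u' < φ n u := hφ n h
      have hdge : 0 ≤ (q - q') n := by
        by_contra hlt
        push_neg at hlt
        have habs2 : |q n - q' n| = -((q - q') n) := by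
          rw [abs_of_neg]
          · simp
          · simpa using hlt
        simp only [Pi.sub_apply] at hdn hlt ⊢
        rw [habs2] at habs
        simp only [Pi.sub_apply] at habs
        nlinarith [habs.1, habs.2, hLψ n]
      have : (X.mulVec (q - q')) n ≤ 0 := by rw [hXd]; linarith
      exact mul_nonpos_of_nonneg_of_nonpos hdge this
    · have : (X.mulVec (q - q')) n = 0 := by rw [hXd, h]; ring
      simp [this]
    · -- u > u'
      have hφn : φ n u < φ n u' := hφ n h
      have hdle : (q - q') n ≤ 0 := by
        by_contra hlt
        push_neg at hlt
        have habs2 : |q n - q' n| = (q - q') n := by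
          rw [abs_of_pos]
          · simp
          · simpa using hlt
        simp only [Pi.sub_apply] at hdn hlt ⊢
        rw [habs2] at habs
        simp only [Pi.sub_apply] at habs
        nlinarith [habs.1, habs.2, hLψ n]
      have : 0 ≤ (X.mulVec (q - q')) n := by rw [hXd]; linarith
      exact mul_nonpos_of_nonpos_of_nonneg hdle this
  have hsum : dotProduct (star (q - q')) (X.mulVec (q - q')) ≤ 0 :=
    Finset.sum_nonpos fun n _ => by simpa using key n
  linarith
end

section
/- Let X ∈ ℝ^{C×C} be symmetric positive definite, let J_ψ, J_φ ∈ ℝ^{C×C} be diagonal matrices with J_ψ ≺ I and J_φ ≺ 0, and let 0 < ε ≤ 1. Then every eigenvalue λ of J = (1−ε)I + εJ_ψ + εJ_φ X is real and satisfies λ < 1. -/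
/-- Upper eigenvalue bound in Theorem 2: for X symmetric positive definite,
J_ψ, J_φ diagonal with J_ψ ≺ I and J_φ ≺ 0, and 0 < ε ≤ 1, every eigenvalue of
J = (1−ε)I + εJ_ψ + εJ_φX is real and less than 1. -/
theorem eigenvalues_real_lt_one {C : ℕ}
    (X Jψ Jφ : Matrix (Fin C) (Fin C) ℝ)
    (hX : X.PosDef) (hψd : Jψ.IsDiag) (hφd : Jφ.IsDiag)
    (hψ : ∀ i, Jψ i i < 1) (hφ : ∀ i, Jφ i i < 0)
    (ε : ℝ) (hε0 : 0 < ε) (hε1 : ε ≤ 1) :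
    ∀ μ : ℂ, (∃ v : Fin C → ℂ, v ≠ 0 ∧
        ((((1 - ε) • (1 : Matrix (Fin C) (Fin C) ℝ) + ε • Jψ + ε • (Jφ * X)).map
            (fun x => (x : ℂ))).mulVec v = μ • v)) →
      μ.im = 0 ∧ μ.re < 1 := by
  intro μ ⟨v, hv0, hv⟩
  set g : Fin C → ℝ := fun i => Jψ i i with hg
  set f : Fin C → ℝ := fun i => Jφ i i with hf
  have hψg : Jψ = Matrix.diagonal g := (hψd.diagonal_diag).symm
  have hφg : Jφ = Matrix.diagonal f := (hφd.diagonal_diag).symm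
  set Jmat : Matrix (Fin C) (Fin C) ℝ :=
    (1 - ε) • (1 : Matrix (Fin C) (Fin C) ℝ) + ε • Jψ + ε • (Jφ * X) with hJmat
  set d : Fin C → ℝ := fun i => Real.sqrt (-f i) with hdd
  have hd : ∀ i, 0 < d i := fun i => Real.sqrt_pos.mpr (by have := hφ i; simp [hf]; linarith)
  have hdsq : ∀ i, d i * d i = -f i := fun i =>
    Real.mul_self_sqrt (by have := hφ i; simp [hf]; linarith)
  have hfd : ∀ i, f i = -(d i * d i) := fun i => by have := hdsq i; linarith
  have hXsym : ∀ i j, X j i = X i j := by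
    intro i j
    have := congrFun (congrFun hX.1 i) j
    simpa [Matrix.conjTranspose_apply] using this
  -- entries of J
  have hJ : ∀ i j, Jmat i j = (if i = j then (1 - ε) + ε * g i else 0) + ε * (f i * X i j) := by
    intro i j
    rcases eq_or_ne i j with rfl | hij
    · simp [hJmat, Matrix.add_apply, Matrix.smul_apply, Matrix.one_apply_eq, hψg, hφg,
        Matrix.diagonal_apply_eq, Matrix.diagonal_mul]
    · simp [hJmat, Matrix.add_apply, Matrix.smul_apply, Matrix.one_apply_ne hij, hψg, hφg,
        Matrix.diagonal_apply_ne _ hij, Matrix.diagonal_mul, hij]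
  -- symmetrized matrix
  set S : Matrix (Fin C) (Fin C) ℝ :=
    Matrix.of (fun i j => (d i)⁻¹ * Jmat i j * d j) with hS
  have hSval : ∀ i j, S i j = (if i = j then (1 - ε) + ε * g i else 0) - ε * (d i * X i j * d j) := by
    intro i j
    rcases eq_or_ne i j with rfl | hij
    · have hdi := (hd i).ne'
      simp only [hS, Matrix.of_apply, hJ i i, if_pos rfl, hfd i]
      field_simp
      ring
    · have hdi := (hd i).ne'
      have hdj := (hd j).ne'
      simp only [hS, Matrix.of_apply, hJ i j, if_neg hij, hfd i]
      field_simp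
      ring
  have hsym : ∀ i j, S j i = S i j := by
    intro i j
    rcases eq_or_ne i j with rfl | hij
    · rfl
    · rw [hSval j i, hSval i j, if_neg (Ne.symm hij), if_neg hij, hXsym i j]
      ring
  -- eigen-equation for original matrix, entrywise
  have hvi : ∀ i, ∑ j, (Jmat i j : ℂ) * v j = μ * v i := by
    intro i
    have := congrFun hv i
    simpa [Matrix.mulVec, dotProduct, Matrix.map_apply] using this
  -- transformed eigenvector
  set w : Fin C → ℂ := fun i => ((d i : ℝ) : ℂ)⁻¹ * v i with hw
  have hw0 : w ≠ 0 := by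
    intro h
    apply hv0
    funext i
    have := congrFun h i
    simp only [hw, Pi.zero_apply] at this ⊢
    have hdne : ((d i : ℝ) : ℂ) ≠ 0 := by
      exact_mod_cast (hd i).ne'
    field_simp at this
    simpa using this
  have heig : ∀ i, ∑ j, (S i j : ℂ) * w j = μ * w i := by
    intro i
    have hdne : ∀ k, ((d k : ℝ) : ℂ) ≠ 0 := fun k => by exact_mod_cast (hd k).ne'
    calc ∑ j, (S i j : ℂ) * w j
        = ∑ j, ((d i : ℝ) : ℂ)⁻¹ * ((Jmat i j : ℂ) * v j) := by
          refine Finset.sum_congr rfl fun j _ => ?_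
          simp only [hS, Matrix.of_apply, hw]
          push_cast
          field_simp [hdne i, hdne j]
      _ = ((d i : ℝ) : ℂ)⁻¹ * ∑ j, (Jmat i j : ℂ) * v j := by rw [Finset.mul_sum]
      _ = ((d i : ℝ) : ℂ)⁻¹ * (μ * v i) := by rw [hvi i]
      _ = μ * w i := by simp only [hw]; ring
  -- μ is real
  obtain ⟨i0, hi0⟩ : ∃ i, w i ≠ 0 := by
    by_contra h
    push_neg at h
    exact hw0 (funext fun i => h i)
  set N : ℝ := ∑ i, Complex.normSq (w i) with hN
  have hNpos : 0 < N := by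
    refine Finset.sum_pos' (fun i _ => Complex.normSq_nonneg _) ⟨i0, Finset.mem_univ _, ?_⟩
    exact Complex.normSq_pos.mpr hi0
  have hcsum : ∑ i, (starRingEnd ℂ) (w i) * (μ * w i) = μ * (N : ℂ) := by
    rw [hN]
    push_cast
    rw [Finset.mul_sum]
    refine Finset.sum_congr rfl fun i _ => ?_
    rw [← Complex.mul_conj]
    ring
  have hkey : (starRingEnd ℂ) (μ * (N : ℂ)) = μ * (N : ℂ) := by
    have e1 : μ * (N : ℂ) = ∑ i, ∑ j, (S i j : ℂ) * ((starRingEnd ℂ) (w i) * w j) := by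
      rw [← hcsum]
      refine Finset.sum_congr rfl fun i _ => ?_
      rw [← heig i, Finset.mul_sum]
      refine Finset.sum_congr rfl fun j _ => ?_
      ring
    rw [e1]
    simp only [map_sum, map_mul, Complex.conj_conj, Complex.conj_ofReal]
    rw [Finset.sum_comm]
    refine Finset.sum_congr rfl fun j _ => Finset.sum_congr rfl fun i _ => ?_
    rw [hsym i j]
    ring
  have hμim : μ.im = 0 := by
    have h2 : (starRingEnd ℂ) μ * (N : ℂ) = μ * (N : ℂ) := by
      rw [← hkey]; simp [Complex.conj_ofReal]
    have hNne : (N : ℂ) ≠ 0 := by exact_mod_cast hNpos.ne'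
    have := mul_right_cancel₀ hNne h2
    rw [Complex.conj_eq_iff_im] at this
    exact this
  refine ⟨hμim, ?_⟩
  -- real eigenvector equation
  have main : ∀ u : Fin C → ℝ, u ≠ 0 → (∀ i, ∑ j, S i j * u j = μ.re * u i) → μ.re < 1 := by
    intro u hu hequ
    obtain ⟨k, hk⟩ : ∃ k, u k ≠ 0 := by
      by_contra h; push_neg at h; exact hu (funext fun i => h i)
    set n : ℝ := ∑ i, u i * u i with hn
    have hnpos : 0 < n := by
      refine Finset.sum_pos' (fun i _ => mul_self_nonneg _) ⟨k, Finset.mem_univ _, ?_⟩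
      exact mul_self_pos.mpr hk
    set du : Fin C → ℝ := fun i => d i * u i with hdu
    have hdu0 : du ≠ 0 := by
      intro h
      have := congrFun h k
      simp only [hdu, Pi.zero_apply] at this
      exact hk (by
        rcases mul_eq_zero.mp this with h1 | h1
        · exact absurd h1 (hd k).ne'
        · exact h1)
    have hB : 0 < ∑ i, du i * ∑ j, X i j * du j := by
      have := hX.dotProduct_mulVec_pos hdu0
      simpa [dotProduct, Matrix.mulVec] using this
    have hqf : μ.re * n = ∑ i, ((1 - ε) + ε * g i) * (u i * u i)
        - ε * ∑ i, du i * ∑ j, X i j * du j := by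
      have e1 : μ.re * n = ∑ i, u i * ∑ j, S i j * u j := by
        rw [hn, Finset.mul_sum]
        refine Finset.sum_congr rfl fun i _ => ?_
        rw [hequ i]; ring
      rw [e1]
      have e2 : ∀ i, u i * ∑ j, S i j * u j
          = ((1 - ε) + ε * g i) * (u i * u i) - ε * (du i * ∑ j, X i j * du j) := by
        intro i
        have e3 : ∀ j, u i * (S i j * u j)
            = (if i = j then ((1 - ε) + ε * g i) * (u i * u j) else 0)
              - ε * (du i * (X i j * du j)) := by
          intro j
          rw [hSval i j]
          rcases eq_or_ne i j with rfl | hij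
          · simp [hdu]; ring
          · simp [hdu, hij]; ring
        rw [Finset.mul_sum, Finset.sum_congr rfl fun j _ => e3 j, Finset.sum_sub_distrib]
        congr 1
        · rw [Finset.sum_ite_eq Finset.univ i (fun j => ((1 - ε) + ε * g i) * (u i * u j))]
          simp
        · rw [← Finset.mul_sum, ← Finset.mul_sum]
      rw [Finset.sum_congr rfl fun i _ => e2 i, Finset.sum_sub_distrib, ← Finset.mul_sum]
    have hbound : ∑ i, ((1 - ε) + ε * g i) * (u i * u i) ≤ n := by
      rw [hn]
      refine Finset.sum_le_sum fun i _ => ?_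
      have h1 : (1 - ε) + ε * g i ≤ 1 := by nlinarith [hψ i]
      nlinarith [mul_self_nonneg (u i)]
    have : μ.re * n < n := by
      rw [hqf]
      have := mul_pos hε0 hB
      linarith
    by_contra hcon
    push_neg at hcon
    nlinarith
  -- get a nonzero real eigenvector from w
  have hμc : μ = ((μ.re : ℝ) : ℂ) := by
    apply Complex.ext <;> simp [hμim]
  have hre : ∀ i, ∑ j, S i j * (w j).re = μ.re * (w i).re := by
    intro i
    have := congrArg Complex.re (heig i)
    simpa [Complex.re_sum, Complex.mul_re, Complex.ofReal_re, Complex.ofReal_im, hμim] using this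
  have him : ∀ i, ∑ j, S i j * (w j).im = μ.re * (w i).im := by
    intro i
    have := congrArg Complex.im (heig i)
    simpa [Complex.im_sum, Complex.mul_im, Complex.ofReal_re, Complex.ofReal_im, hμim] using this
  by_cases hcase : (w i0).re ≠ 0
  · exact main (fun j => (w j).re) (fun h => hcase (by simpa using congrFun h i0)) hre
  · push_neg at hcase
    have him0 : (w i0).im ≠ 0 := by
      intro h
      exact hi0 (by apply Complex.ext <;> simp [hcase, h])
    exact main (fun j => (w j).im) (fun h => him0 (by simpa using congrFun h i0)) him
end

section
/- Let X ∈ ℝ^{C×C} be symmetric positive definite, J_ψ, J_φ ∈ ℝ^{C×C} diagonal with J_ψ ≺ I, J_φ ≺ 0, and bounds ‖J_ψ‖ ≤ L_ψ, ‖J_φ‖ ≤ L_φ. If 0 < ε < 2/(L_ψ + L_φ‖X‖ + 1), then the spectral radius of J = (1−ε)I + εJ_ψ + εJ_φ X is strictly less than 1. -/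
lemma opNorm_nonneg {C : ℕ} (M : Matrix (Fin C) (Fin C) ℝ) : 0 ≤ opNorm M :=
  norm_nonneg _

lemma mulVec_norm_le {C : ℕ} (M : Matrix (Fin C) (Fin C) ℝ) (u : Fin C → ℝ) :
    ‖(WithLp.equiv 2 (Fin C → ℝ)).symm (M.mulVec u)‖ ≤
      opNorm M * ‖(WithLp.equiv 2 (Fin C → ℝ)).symm u‖ := by
  have h := (LinearMap.toContinuousLinearMap (Matrix.toEuclideanLin M)).le_opNorm
    ((WithLp.equiv 2 (Fin C → ℝ)).symm u)
  exact h

/-- Spectral radius bound in Theorem 2: for X symmetric positive definite,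
J_ψ, J_φ diagonal with J_ψ ≺ I, J_φ ≺ 0, ‖J_ψ‖ ≤ L_ψ, ‖J_φ‖ ≤ L_φ, and
0 < ε < 2/(L_ψ + L_φ‖X‖ + 1), every eigenvalue of
J = (1−ε)I + εJ_ψ + εJ_φX has modulus strictly less than 1. -/
theorem spectral_radius_lt_one {C : ℕ}
    (X Jψ Jφ : Matrix (Fin C) (Fin C) ℝ)
    (hX : X.PosDef) (hψd : Jψ.IsDiag) (hφd : Jφ.IsDiag)
    (hψ : ∀ i, Jψ i i < 1) (hφ : ∀ i, Jφ i i < 0)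
    (Lψ Lφ : ℝ) (hψn : opNorm Jψ ≤ Lψ) (hφn : opNorm Jφ ≤ Lφ)
    (ε : ℝ) (hε0 : 0 < ε) (hε1 : ε < 2 / (Lψ + Lφ * opNorm X + 1)) :
    ∀ μ : ℂ, (∃ v : Fin C → ℂ, v ≠ 0 ∧
        ((((1 - ε) • (1 : Matrix (Fin C) (Fin C) ℝ) + ε • Jψ + ε • (Jφ * X)).map
            (fun x => (x : ℂ))).mulVec v = μ • v)) →
      ‖μ‖ < 1 := by
  rintro μ ⟨v, hv, heq⟩
  have hεc : (ε : ℂ) ≠ 0 := by exact_mod_cast hε0.ne'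
  -- rewrite the eigen-equation
  set f : ℝ →+* ℂ := Complex.ofRealHom with hf
  have hmapsmul : ∀ (c : ℝ) (M : Matrix (Fin C) (Fin C) ℝ),
      (c • M).map (fun x => (x : ℂ)) = (c : ℂ) • M.map (fun x => (x : ℂ)) := by
    intro c M
    ext i j
    simp [Matrix.map_apply, Complex.ofReal_mul]
  have hmap1 : ((1 : Matrix (Fin C) (Fin C) ℝ)).map (fun x => (x : ℂ)) =
      (1 : Matrix (Fin C) (Fin C) ℂ) := by
    ext i j
    simp [Matrix.map_apply, Matrix.one_apply, apply_ite (fun x : ℝ => (x : ℂ))]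
  have hmapadd : ∀ (M N : Matrix (Fin C) (Fin C) ℝ),
      (M + N).map (fun x => (x : ℂ)) = M.map (fun x => (x : ℂ)) + N.map (fun x => (x : ℂ)) := by
    intro M N
    ext i j
    simp [Matrix.map_apply]
  set ν : ℂ := (μ - (1 - ε)) / ε with hν
  have hw : (Jψ.map (fun x => (x : ℂ))).mulVec v
      + ((Jφ * X).map (fun x => (x : ℂ))).mulVec v = ν • v := by
    have h1 : ((1 - ε : ℝ) : ℂ) • v + (ε : ℂ) • (Jψ.map (fun x => (x : ℂ))).mulVec v
        + (ε : ℂ) • ((Jφ * X).map (fun x => (x : ℂ))).mulVec v = μ • v := by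
      rw [← heq, hmapadd, hmapadd, hmapsmul, hmapsmul, hmapsmul, hmap1]
      rw [Matrix.add_mulVec, Matrix.add_mulVec, Matrix.smul_mulVec,
        Matrix.smul_mulVec, Matrix.smul_mulVec, Matrix.one_mulVec]
    funext i
    have h := congrFun h1 i
    simp only [Pi.add_apply, Pi.smul_apply, smul_eq_mul] at h ⊢
    rw [hν]
    push_cast at h ⊢
    field_simp
    linear_combination h
  -- diagonal collapse of the matrix actions
  have hψv : ∀ i, ((Jψ.map (fun x => (x : ℂ))).mulVec v) i = (Jψ i i : ℂ) * v i := by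
    intro i
    rw [Matrix.mulVec, dotProduct]
    rw [Finset.sum_eq_single i]
    · simp [Matrix.map_apply]
    · intro j _ hj
      simp [Matrix.map_apply, hψd (Ne.symm hj)]
    · simp
  have hφXv : ∀ i, (((Jφ * X).map (fun x => (x : ℂ))).mulVec v) i
      = (Jφ i i : ℂ) * ∑ j, (X i j : ℂ) * v j := by
    intro i
    rw [Matrix.mulVec, dotProduct, Finset.mul_sum]
    refine Finset.sum_congr rfl fun j _ => ?_
    have hmul : (Jφ * X) i j = Jφ i i * X i j := by
      rw [Matrix.mul_apply, Finset.sum_eq_single i]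
      · intro k _ hk
        rw [hφd (Ne.symm hk), zero_mul]
      · simp
    simp [Matrix.map_apply, hmul]
    ring
  -- positive diagonal weights
  set d : Fin C → ℝ := fun i => -Jφ i i with hd
  have hdpos : ∀ i, 0 < d i := fun i => by simpa [hd] using neg_pos.mpr (hφ i)
  set n : Fin C → ℝ := fun i => Complex.normSq (v i) with hn
  have hn0 : ∀ i, 0 ≤ n i := fun i => Complex.normSq_nonneg _
  set R : ℝ := ∑ i, (d i)⁻¹ * Jψ i i * n i with hR
  set S : ℝ := ∑ i, (d i)⁻¹ * n i with hS
  set T : ℂ := ∑ i, ∑ j, (starRingEnd ℂ) (v i) * (X i j : ℂ) * v j with hT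
  -- key identity via the weighted quadratic form
  have hkey : ν * (S : ℂ) = (R : ℂ) - T := by
    have lhs1 : ∑ i, ((d i)⁻¹ : ℂ) * ((starRingEnd ℂ) (v i)
        * (((Jψ.map (fun x => (x : ℂ))).mulVec v) i
          + (((Jφ * X).map (fun x => (x : ℂ))).mulVec v) i)) = ν * (S : ℂ) := by
      have : ∀ i, ((d i)⁻¹ : ℂ) * ((starRingEnd ℂ) (v i)
          * (((Jψ.map (fun x => (x : ℂ))).mulVec v) i
            + (((Jφ * X).map (fun x => (x : ℂ))).mulVec v) i))
          = ν * (((d i)⁻¹ * n i : ℝ) : ℂ) := by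
        intro i
        have := congrFun hw i
        rw [Pi.add_apply] at this
        rw [this]
        simp only [Pi.smul_apply, smul_eq_mul]
        have hcv : (starRingEnd ℂ) (v i) * v i = ((n i : ℝ) : ℂ) := by
          rw [hn, mul_comm]
          exact Complex.mul_conj _
        push_cast
        rw [← hcv]
        ring
      rw [Finset.sum_congr rfl (fun i _ => this i), ← Finset.mul_sum]
      congr 1
      rw [hS]
      push_cast
      ring
    have lhs2 : ∑ i, ((d i)⁻¹ : ℂ) * ((starRingEnd ℂ) (v i)
        * (((Jψ.map (fun x => (x : ℂ))).mulVec v) i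
          + (((Jφ * X).map (fun x => (x : ℂ))).mulVec v) i)) = (R : ℂ) - T := by
      have : ∀ i, ((d i)⁻¹ : ℂ) * ((starRingEnd ℂ) (v i)
          * (((Jψ.map (fun x => (x : ℂ))).mulVec v) i
            + (((Jφ * X).map (fun x => (x : ℂ))).mulVec v) i))
          = (((d i)⁻¹ * Jψ i i * n i : ℝ) : ℂ)
            - ∑ j, (starRingEnd ℂ) (v i) * (X i j : ℂ) * v j := by
        intro i
        rw [hψv i, hφXv i]
        have hdiv : ((d i)⁻¹ : ℂ) * (Jφ i i : ℂ) = -1 := by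
          have h0 : (Jφ i i : ℂ) ≠ 0 := by exact_mod_cast (hφ i).ne
          rw [hd]
          push_cast
          rw [inv_neg, neg_mul, inv_mul_cancel₀ h0]
        have hcv : (starRingEnd ℂ) (v i) * v i = ((n i : ℝ) : ℂ) := by
          rw [hn, mul_comm]; exact Complex.mul_conj _
        have expand : ((d i)⁻¹ : ℂ) * ((starRingEnd ℂ) (v i)
            * ((Jψ i i : ℂ) * v i + (Jφ i i : ℂ) * ∑ j, (X i j : ℂ) * v j))
            = ((d i)⁻¹ : ℂ) * (Jψ i i : ℂ) * ((starRingEnd ℂ) (v i) * v i)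
              + (((d i)⁻¹ : ℂ) * (Jφ i i : ℂ))
                * ((starRingEnd ℂ) (v i) * ∑ j, (X i j : ℂ) * v j) := by ring
        have hsum2 : (starRingEnd ℂ) (v i) * ∑ j, (X i j : ℂ) * v j
            = ∑ j, (starRingEnd ℂ) (v i) * (X i j : ℂ) * v j := by
          rw [Finset.mul_sum]
          exact Finset.sum_congr rfl fun j _ => (mul_assoc _ _ _).symm
        rw [expand, hdiv, hcv, hsum2]
        push_cast
        ring
      rw [Finset.sum_congr rfl (fun i _ => this i), Finset.sum_sub_distrib, ← hT]
      congr 1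
      rw [hR]
      push_cast
      ring
    rw [← lhs1, lhs2]
  -- T is real with positive real part
  set a : Fin C → ℝ := fun i => (v i).re with ha
  set b : Fin C → ℝ := fun i => (v i).im with hb
  have hTval : T = ((dotProduct a (X.mulVec a) + dotProduct b (X.mulVec b) : ℝ) : ℂ) := by
    rw [hT]
    have hterm : ∀ i j, (starRingEnd ℂ) (v i) * (X i j : ℂ) * v j
        = ((X i j * (a i * a j + b i * b j) : ℝ) : ℂ)
          + ((X i j * (a i * b j - b i * a j) : ℝ) : ℂ) * Complex.I := by
      intro i j
      apply Complex.ext <;>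
        simp [Complex.mul_re, Complex.mul_im, ha, hb] <;> ring
    rw [Finset.sum_congr rfl (fun i _ => Finset.sum_congr rfl (fun j _ => hterm i j))]
    have hsym : ∀ i j : Fin C, X i j = X j i := by
      intro i j
      have h := congrFun (congrFun hX.1 i) j
      simpa [Matrix.conjTranspose_apply] using h.symm
    apply Complex.ext
    · rw [Complex.ofReal_re, Complex.re_sum]
      have hinner : ∀ i, (∑ j, (((X i j * (a i * a j + b i * b j) : ℝ) : ℂ)
          + ((X i j * (a i * b j - b i * a j) : ℝ) : ℂ) * Complex.I)).re
          = ∑ j, X i j * (a i * a j + b i * b j) := by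
        intro i
        rw [Complex.re_sum]
        simp
      rw [Finset.sum_congr rfl fun i _ => hinner i]
      rw [dotProduct, dotProduct, ← Finset.sum_add_distrib]
      refine Finset.sum_congr rfl fun i _ => ?_
      simp only [Matrix.mulVec, dotProduct]
      rw [Finset.mul_sum, Finset.mul_sum, ← Finset.sum_add_distrib]
      refine Finset.sum_congr rfl fun j _ => ?_
      ring
    · rw [Complex.ofReal_im, Complex.im_sum]
      have hinner : ∀ i, (∑ j, (((X i j * (a i * a j + b i * b j) : ℝ) : ℂ)
          + ((X i j * (a i * b j - b i * a j) : ℝ) : ℂ) * Complex.I)).im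
          = ∑ j, X i j * (a i * b j - b i * a j) := by
        intro i
        rw [Complex.im_sum]
        simp
      rw [Finset.sum_congr rfl fun i _ => hinner i]
      have hFA : (∑ i, ∑ j, X i j * (a i * b j - b i * a j))
          = - ∑ i, ∑ j, X i j * (a i * b j - b i * a j) := by
        conv_lhs => rw [Finset.sum_comm]
        rw [← Finset.sum_neg_distrib]
        refine Finset.sum_congr rfl fun j _ => ?_
        rw [← Finset.sum_neg_distrib]
        refine Finset.sum_congr rfl fun i _ => ?_
        rw [hsym i j]
        ring
      linarith
  have hab : a ≠ 0 ∨ b ≠ 0 := by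
    by_contra h
    push_neg at h
    apply hv
    funext i
    have h1 := congrFun h.1 i
    have h2 := congrFun h.2 i
    simp only [ha, hb, Pi.zero_apply] at h1 h2
    apply Complex.ext <;> simpa
  have hq : ∀ x : Fin C → ℝ, 0 ≤ dotProduct x (X.mulVec x) := by
    intro x
    have := hX.posSemidef.dotProduct_mulVec_nonneg x
    simpa using this
  have hqpos : ∀ x : Fin C → ℝ, x ≠ 0 → 0 < dotProduct x (X.mulVec x) := by
    intro x hx
    have := hX.dotProduct_mulVec_pos hx
    simpa using this
  set t : ℝ := dotProduct a (X.mulVec a) + dotProduct b (X.mulVec b) with ht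
  have htpos : 0 < t := by
    rcases hab with h | h
    · exact add_pos_of_pos_of_nonneg (hqpos a h) (hq b)
    · exact add_pos_of_nonneg_of_pos (hq a) (hqpos b h)
  -- S > 0
  have hSpos : 0 < S := by
    obtain ⟨i, hi⟩ := Function.ne_iff.mp hv
    have hni : 0 < n i := by
      rw [hn]
      exact Complex.normSq_pos.mpr hi
    refine Finset.sum_pos' (fun j _ => mul_nonneg (le_of_lt (inv_pos.mpr (hdpos j))) (hn0 j)) ?_
    exact ⟨i, Finset.mem_univ i, mul_pos (inv_pos.mpr (hdpos i)) hni⟩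
  -- ν is real
  set lam : ℝ := (R - t) / S with hlam
  have hνreal : ν = (lam : ℂ) := by
    have hs : (S : ℂ) ≠ 0 := by exact_mod_cast hSpos.ne'
    have : ν * (S : ℂ) = ((R - t : ℝ) : ℂ) := by
      rw [hkey, hTval, ht]; push_cast; ring
    rw [hlam]
    push_cast
    rw [eq_div_iff hs, this]
    push_cast
    ring
  -- λ < 1
  have hRS : R ≤ S := by
    refine Finset.sum_le_sum fun i _ => ?_
    rw [mul_assoc]
    refine mul_le_mul_of_nonneg_left ?_ (le_of_lt (inv_pos.mpr (hdpos i)))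
    calc Jψ i i * n i ≤ 1 * n i := mul_le_mul_of_nonneg_right (le_of_lt (hψ i)) (hn0 i)
    _ = n i := one_mul _
  have hlam1 : lam < 1 := by
    rw [hlam, div_lt_one hSpos]
    linarith
  -- lower bound on λ via operator norms
  have hcomp : ∀ i, (Jψ i i : ℂ) * v i + (Jφ i i : ℂ) * (∑ j, (X i j : ℂ) * v j)
      = (lam : ℂ) * v i := by
    intro i
    have h := congrFun hw i
    rw [Pi.add_apply, hψv i, hφXv i, hνreal] at h
    simpa using h
  have hsum_re : ∀ i, (∑ j, (X i j : ℂ) * v j).re = (X.mulVec a) i := by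
    intro i
    rw [Complex.re_sum]
    simp only [Complex.mul_re, Complex.ofReal_re, Complex.ofReal_im, zero_mul, sub_zero]
    simp [Matrix.mulVec, dotProduct, ha]
  have hsum_im : ∀ i, (∑ j, (X i j : ℂ) * v j).im = (X.mulVec b) i := by
    intro i
    rw [Complex.im_sum]
    simp only [Complex.mul_im, Complex.ofReal_re, Complex.ofReal_im, zero_mul, add_zero]
    simp [Matrix.mulVec, dotProduct, hb]
  have hdiagmul : ∀ (M : Matrix (Fin C) (Fin C) ℝ), M.IsDiag →
      ∀ (x : Fin C → ℝ) (i : Fin C), M.mulVec x i = M i i * x i := by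
    intro M hM x i
    rw [Matrix.mulVec, dotProduct, Finset.sum_eq_single i]
    · intro j _ hj
      rw [hM (Ne.symm hj), zero_mul]
    · simp
  have heiga : Jψ.mulVec a + Jφ.mulVec (X.mulVec a) = lam • a := by
    funext i
    have h := congrArg Complex.re (hcomp i)
    simp only [Complex.add_re, Complex.mul_re, Complex.ofReal_re, Complex.ofReal_im,
      zero_mul, sub_zero, hsum_re i] at h
    simp only [Pi.add_apply, Pi.smul_apply, smul_eq_mul, hdiagmul Jψ hψd a i,
      hdiagmul Jφ hφd (X.mulVec a) i]
    simpa [ha] using h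
  have heigb : Jψ.mulVec b + Jφ.mulVec (X.mulVec b) = lam • b := by
    funext i
    have h := congrArg Complex.im (hcomp i)
    simp only [Complex.add_im, Complex.mul_im, Complex.ofReal_re, Complex.ofReal_im,
      zero_mul, add_zero, hsum_im i] at h
    simp only [Pi.add_apply, Pi.smul_apply, smul_eq_mul, hdiagmul Jψ hψd b i,
      hdiagmul Jφ hφd (X.mulVec b) i]
    simpa [hb] using h
  have hLφ0 : 0 ≤ Lφ := le_trans (opNorm_nonneg Jφ) hφn
  have hLψ0 : 0 ≤ Lψ := le_trans (opNorm_nonneg Jψ) hψn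
  have hbound : ∀ u : Fin C → ℝ, u ≠ 0 →
      Jψ.mulVec u + Jφ.mulVec (X.mulVec u) = lam • u →
      |lam| ≤ Lψ + Lφ * opNorm X := by
    intro u hu hequ
    set u' : EuclideanSpace ℝ (Fin C) := (WithLp.equiv 2 (Fin C → ℝ)).symm u with hu'def
    have hu'pos : 0 < ‖u'‖ := by
      rw [norm_pos_iff]
      intro h0
      exact hu (congrArg (WithLp.equiv 2 (Fin C → ℝ)) h0)
    have key : |lam| * ‖u'‖ ≤ (Lψ + Lφ * opNorm X) * ‖u'‖ := by
      have h0 : ‖(WithLp.equiv 2 (Fin C → ℝ)).symm (lam • u)‖ = |lam| * ‖u'‖ := by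
        have : (WithLp.equiv 2 (Fin C → ℝ)).symm (lam • u) = lam • u' := rfl
        rw [this, norm_smul, Real.norm_eq_abs]
      have h1 : (WithLp.equiv 2 (Fin C → ℝ)).symm (Jψ.mulVec u + Jφ.mulVec (X.mulVec u))
          = (WithLp.equiv 2 (Fin C → ℝ)).symm (Jψ.mulVec u)
            + (WithLp.equiv 2 (Fin C → ℝ)).symm (Jφ.mulVec (X.mulVec u)) := rfl
      have hXu : ‖(WithLp.equiv 2 (Fin C → ℝ)).symm (X.mulVec u)‖ ≤ opNorm X * ‖u'‖ :=
        mulVec_norm_le X u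
      calc |lam| * ‖u'‖ = ‖(WithLp.equiv 2 (Fin C → ℝ)).symm (lam • u)‖ := h0.symm
        _ = ‖(WithLp.equiv 2 (Fin C → ℝ)).symm (Jψ.mulVec u + Jφ.mulVec (X.mulVec u))‖ := by
              rw [hequ]
        _ ≤ ‖(WithLp.equiv 2 (Fin C → ℝ)).symm (Jψ.mulVec u)‖
              + ‖(WithLp.equiv 2 (Fin C → ℝ)).symm (Jφ.mulVec (X.mulVec u))‖ := by
              rw [h1]; exact norm_add_le _ _
        _ ≤ opNorm Jψ * ‖u'‖
              + opNorm Jφ * ‖(WithLp.equiv 2 (Fin C → ℝ)).symm (X.mulVec u)‖ :=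
              add_le_add (mulVec_norm_le Jψ u) (mulVec_norm_le Jφ (X.mulVec u))
        _ ≤ Lψ * ‖u'‖ + Lφ * (opNorm X * ‖u'‖) := by
              refine add_le_add (mul_le_mul_of_nonneg_right hψn (norm_nonneg _)) ?_
              exact mul_le_mul hφn hXu (norm_nonneg _) hLφ0
        _ = (Lψ + Lφ * opNorm X) * ‖u'‖ := by ring
    exact le_of_mul_le_mul_right key hu'pos
  have hlamlb : |lam| ≤ Lψ + Lφ * opNorm X := by
    rcases hab with h | h
    · exact hbound a h heiga
    · exact hbound b h heigb
  -- conclude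
  have hμval : μ = ((1 - ε + ε * lam : ℝ) : ℂ) := by
    have h1 : μ - ((1 : ℂ) - (ε : ℂ)) = (ε : ℂ) * ν := by
      rw [hν]
      field_simp
    rw [hνreal] at h1
    push_cast
    linear_combination h1
  rw [hμval, Complex.norm_real, Real.norm_eq_abs, abs_lt]
  set K : ℝ := Lψ + Lφ * opNorm X with hK
  have hK0 : 0 ≤ K := by
    rw [hK]
    have : 0 ≤ Lφ * opNorm X := mul_nonneg hLφ0 (opNorm_nonneg X)
    linarith
  have hεK : ε * (K + 1) < 2 := by
    have hK1 : 0 < K + 1 := by linarith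
    rw [hK] at *
    calc ε * (Lψ + Lφ * opNorm X + 1)
        < 2 / (Lψ + Lφ * opNorm X + 1) * (Lψ + Lφ * opNorm X + 1) :=
          mul_lt_mul_of_pos_right hε1 hK1
      _ = 2 := by field_simp
  have hlb : -K ≤ lam := neg_le_of_abs_le hlamlb
  constructor
  · nlinarith [mul_pos hε0 (sub_pos.mpr hlam1)]
  · nlinarith [mul_pos hε0 (sub_pos.mpr hlam1)]
end
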